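/- arXiv:0905.3236 — 2 statements merged into one kernel-verified Lean document; each statement's English description precedes it below -/
import Mathlib

section
/- Let K, G : [0,∞) → ℝ be continuous functions with K(t) ≥ G(t) for all t ≥ 0, and let f, m : [0,∞) → ℝ be twice differentiable functions satisfying f''(t) + K(t)·f(t) = 0 with f(0) = 1 and f'(0) = 0, and m''(t) + G(t)·m(t) = 0 with m(0) = 1 and m'(0) = 0. If f(t) > 0 for all t ∈ (0,∞), m(t) > 0 for all t ∈ [0,∞), and ∫₀^∞ 1/m(t)² dt = ∞, then K(t) = G(t) for all t ∈ [0,∞). -/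
open Set MeasureTheory

/-- Lemma 6.1 (L–1): ODE comparison forcing equality of curvature functions. -/
theorem odeComparison_eq_of_integral_div_sq_eq_top
    (K G f m : ℝ → ℝ)
    (hK : ContinuousOn K (Ici 0)) (hG : ContinuousOn G (Ici 0))
    (hKG : ∀ t ≥ (0:ℝ), G t ≤ K t)
    (hfd : ∀ t ≥ (0:ℝ), DifferentiableAt ℝ f t)
    (hfd' : ∀ t ≥ (0:ℝ), DifferentiableAt ℝ (deriv f) t)
    (hmd : ∀ t ≥ (0:ℝ), DifferentiableAt ℝ m t)
    (hmd' : ∀ t ≥ (0:ℝ), DifferentiableAt ℝ (deriv m) t)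
    (hfode : ∀ t ≥ (0:ℝ), deriv (deriv f) t + K t * f t = 0)
    (hf0 : f 0 = 1) (hf'0 : deriv f 0 = 0)
    (hmode : ∀ t ≥ (0:ℝ), deriv (deriv m) t + G t * m t = 0)
    (hm0 : m 0 = 1) (hm'0 : deriv m 0 = 0)
    (hfpos : ∀ t > (0:ℝ), 0 < f t)
    (hmpos : ∀ t ≥ (0:ℝ), 0 < m t)
    (hint : ∫⁻ t in Ioi (0:ℝ), ENNReal.ofReal (1 / (m t) ^ 2) = ⊤) :
    ∀ t ≥ (0:ℝ), K t = G t := by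
  by_contra hcon
  push_neg at hcon
  obtain ⟨t₁, ht₁, hne⟩ := hcon
  -- basic positivity/continuity facts
  have hfnn : ∀ t ≥ (0:ℝ), 0 ≤ f t := by
    intro t ht
    rcases eq_or_lt_of_le ht with h | h
    · rw [← h, hf0]; norm_num
    · exact le_of_lt (hfpos t h)
  have hfc : ContinuousOn f (Ici 0) := fun t ht => (hfd t ht).continuousAt.continuousWithinAt
  have hmc : ContinuousOn m (Ici 0) := fun t ht => (hmd t ht).continuousAt.continuousWithinAt
  have hfc' : ContinuousOn (deriv f) (Ici 0) :=
    fun t ht => (hfd' t ht).continuousAt.continuousWithinAt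
  have hmc' : ContinuousOn (deriv m) (Ici 0) :=
    fun t ht => (hmd' t ht).continuousAt.continuousWithinAt
  -- the Wronskian
  set W : ℝ → ℝ := fun t => deriv f t * m t - f t * deriv m t with hWdef
  set N : ℝ → ℝ := fun t => (G t - K t) * (f t * m t) with hNdef
  have hW0 : W 0 = 0 := by simp [hWdef, hf'0, hm'0, hf0, hm0]
  have hWd : ∀ t ≥ (0:ℝ), HasDerivAt W (N t) t := by
    intro t ht
    have h1 := (((hfd' t ht).hasDerivAt.mul (hmd t ht).hasDerivAt).sub
      (((hfd t ht).hasDerivAt).mul (hmd' t ht).hasDerivAt))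
    refine h1.congr_deriv ?_
    have e1 := hfode t ht
    have e2 := hmode t ht
    simp only [hNdef]
    linear_combination m t * e1 - f t * e2
  have hNc : ContinuousOn N (Ici 0) := by
    apply ContinuousOn.mul (ContinuousOn.sub hG hK) (ContinuousOn.mul hfc hmc)
  have hNint : ∀ a b : ℝ, 0 ≤ a → a ≤ b → IntervalIntegrable N volume a b := by
    intro a b ha hab
    apply ContinuousOn.intervalIntegrable
    apply hNc.mono
    rw [uIcc_of_le hab]
    intro x hx
    exact le_trans ha hx.1
  have hFTC : ∀ a b : ℝ, 0 ≤ a → a ≤ b → W b - W a = ∫ u in a..b, N u := by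
    intro a b ha hab
    rw [intervalIntegral.integral_eq_sub_of_hasDerivAt _ (hNint a b ha hab)]
    intro x hx
    rw [uIcc_of_le hab] at hx
    exact hWd x (le_trans ha hx.1)
  have hNnonpos : ∀ u ≥ (0:ℝ), N u ≤ 0 := by
    intro u hu
    have h1 : G u - K u ≤ 0 := by linarith [hKG u hu]
    have h2 : 0 ≤ f u * m u := mul_nonneg (hfnn u hu) (le_of_lt (hmpos u hu))
    simp only [hNdef]
    exact mul_nonpos_of_nonpos_of_nonneg h1 h2
  have hIntNnonpos : ∀ a b : ℝ, 0 ≤ a → a ≤ b → (∫ u in a..b, N u) ≤ 0 := by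
    intro a b ha hab
    have h : 0 ≤ ∫ u in a..b, -N u := intervalIntegral.integral_nonneg hab
      (fun u hu => by simpa using hNnonpos u (le_trans ha hu.1))
    rw [intervalIntegral.integral_neg] at h
    linarith
  have hWnonpos : ∀ t ≥ (0:ℝ), W t ≤ 0 := by
    intro t ht
    have := hFTC 0 t le_rfl ht
    rw [hW0] at this
    have h2 := hIntNnonpos 0 t le_rfl ht
    linarith
  -- find t₀ > t₁ with W t₀ < 0
  have hGK1 : G t₁ < K t₁ := lt_of_le_of_ne (hKG t₁ ht₁) (fun h => hne h.symm)
  -- continuity of K - G at t₁ within Ici 0 gives a small interval where K - G > 0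
  have hKGc : ContinuousWithinAt (fun u => K u - G u) (Ici 0) t₁ :=
    ((hK t₁ ht₁).sub (hG t₁ ht₁))
  have hev : ∀ᶠ u in nhdsWithin t₁ (Ici 0), 0 < K u - G u :=
    hKGc.eventually (eventually_gt_nhds (by simpa using sub_pos.mpr hGK1))
  obtain ⟨δ, hδpos, hδ⟩ := Metric.mem_nhdsWithin_iff.mp hev
  set t₀ : ℝ := t₁ + δ / 2 with ht₀def
  have ht₀pos : 0 < t₀ := by positivity
  have ht₁t₀ : t₁ < t₀ := by simp [ht₀def]; positivity
  have hNneg : ∀ u ∈ Ioo t₁ t₀, N u < 0 := by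
    intro u hu
    have hu0 : 0 < u := lt_of_le_of_lt ht₁ hu.1
    have hub : u ∈ Metric.ball t₁ δ ∩ Ici 0 := by
      constructor
      · rw [Metric.mem_ball, Real.dist_eq, abs_of_nonneg (by linarith [hu.1])]
        have := hu.2
        rw [ht₀def] at this
        linarith
      · exact le_of_lt hu0
    have hKGu : 0 < K u - G u := hδ hub
    have hfu : 0 < f u := hfpos u hu0
    have hmu : 0 < m u := hmpos u (le_of_lt hu0)
    simp only [hNdef]
    nlinarith [mul_pos hKGu (mul_pos hfu hmu)]
  have hWt₀neg : W t₀ < 0 := by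
    have heq : W t₀ = (∫ u in (0:ℝ)..t₁, N u) + ∫ u in t₁..t₀, N u := by
      rw [intervalIntegral.integral_add_adjacent_intervals (hNint 0 t₁ le_rfl ht₁)
        (hNint t₁ t₀ ht₁ (le_of_lt ht₁t₀))]
      have := hFTC 0 t₀ le_rfl (le_of_lt ht₀pos)
      rw [hW0] at this
      linarith
    have h1 := hIntNnonpos 0 t₁ le_rfl ht₁
    have h2 : (∫ u in t₁..t₀, N u) < 0 := by
      have hpos : (0:ℝ) < ∫ x in t₁..t₀, -N x :=
        intervalIntegral.intervalIntegral_pos_of_pos_on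
          ((hNint t₁ t₀ ht₁ (le_of_lt ht₁t₀)).neg)
          (fun x hx => by simpa using (hNneg x hx)) ht₁t₀
      rw [intervalIntegral.integral_neg] at hpos
      linarith
    linarith
  set c : ℝ := -W t₀ with hcdef
  have hc : 0 < c := by simp [hcdef]; linarith
  have hWle : ∀ t ≥ t₀, W t ≤ -c := by
    intro t ht
    have := hFTC t₀ t (le_of_lt ht₀pos) ht
    have h2 := hIntNnonpos t₀ t (le_of_lt ht₀pos) ht
    simp [hcdef]
    linarith
  -- derivative of f / m
  have hHd : ∀ t ≥ (0:ℝ), HasDerivAt (fun u => f u / m u) (W t / m t ^ 2) t := by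
    intro t ht
    exact (hfd t ht).hasDerivAt.div (hmd t ht).hasDerivAt (ne_of_gt (hmpos t ht))
  have hWm2c : ContinuousOn (fun u => W u / m u ^ 2) (Ici 0) := by
    apply ContinuousOn.div ((hfc'.mul hmc).sub (hfc.mul hmc')) (hmc.pow 2)
    intro x hx
    exact pow_ne_zero 2 (ne_of_gt (hmpos x hx))
  have hWm2int : ∀ a b : ℝ, 0 ≤ a → a ≤ b →
      IntervalIntegrable (fun u => W u / m u ^ 2) volume a b := by
    intro a b ha hab
    apply ContinuousOn.intervalIntegrable
    apply hWm2c.mono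
    rw [uIcc_of_le hab]
    exact fun x hx => le_trans ha hx.1
  have hm2c : ContinuousOn (fun u => 1 / m u ^ 2) (Ici 0) := by
    apply ContinuousOn.div continuousOn_const (hmc.pow 2)
    intro x hx
    exact pow_ne_zero 2 (ne_of_gt (hmpos x hx))
  have hm2int : ∀ a b : ℝ, 0 ≤ a → a ≤ b →
      IntervalIntegrable (fun u => 1 / m u ^ 2) volume a b := by
    intro a b ha hab
    apply ContinuousOn.intervalIntegrable
    apply hm2c.mono
    rw [uIcc_of_le hab]
    exact fun x hx => le_trans ha hx.1
  have hHFTC : ∀ t ≥ t₀, f t / m t - f t₀ / m t₀ = ∫ u in t₀..t, W u / m u ^ 2 := by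
    intro t ht
    rw [intervalIntegral.integral_eq_sub_of_hasDerivAt _ (hWm2int t₀ t (le_of_lt ht₀pos) ht)]
    intro x hx
    rw [uIcc_of_le ht] at hx
    exact hHd x (le_trans (le_of_lt ht₀pos) hx.1)
  -- the key bound: for all t ≥ t₀, c * ∫_{t₀}^t 1/m² ≤ f t₀ / m t₀
  set B : ℝ := f t₀ / m t₀ / c with hBdef
  have hBpos : 0 < B := by
    apply div_pos (div_pos (hfpos t₀ ht₀pos) (hmpos t₀ (le_of_lt ht₀pos))) hc
  have hbound : ∀ t ≥ t₀, (∫ u in t₀..t, 1 / m u ^ 2) ≤ B := by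
    intro t ht
    have h1 : (∫ u in t₀..t, W u / m u ^ 2) ≤ ∫ u in t₀..t, -c * (1 / m u ^ 2) := by
      apply intervalIntegral.integral_mono_on ht (hWm2int t₀ t (le_of_lt ht₀pos) ht)
        (((hm2int t₀ t (le_of_lt ht₀pos) ht)).const_mul (-c))
      intro x hx
      have hx0 : (0:ℝ) ≤ x := le_trans (le_of_lt ht₀pos) hx.1
      have hm2 : 0 < m x ^ 2 := pow_pos (hmpos x hx0) 2
      have hWx := hWle x hx.1
      rw [mul_one_div]
      gcongr
    rw [intervalIntegral.integral_const_mul] at h1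
    have h2 := hHFTC t ht
    have h3 : 0 < f t / m t :=
      div_pos (hfpos t (lt_of_lt_of_le ht₀pos ht)) (hmpos t (le_trans (le_of_lt ht₀pos) ht))
    have h4 : c * (∫ u in t₀..t, 1 / m u ^ 2) ≤ f t₀ / m t₀ := by nlinarith
    rw [hBdef, le_div_iff₀ hc]
    nlinarith [h4]
  -- uniform bound on ∫_0^x 1/m²
  set C1 : ℝ := ∫ u in (0:ℝ)..t₀, 1 / m u ^ 2 with hC1def
  have hintnn : ∀ a b : ℝ, 0 ≤ a → a ≤ b → 0 ≤ ∫ u in a..b, 1 / m u ^ 2 :=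
    fun a b ha hab => intervalIntegral.integral_nonneg hab (fun u hu => by positivity)
  have hallbound : ∀ x ≥ (0:ℝ), (∫ u in (0:ℝ)..x, 1 / m u ^ 2) ≤ C1 + B := by
    intro x hx
    rcases le_total x t₀ with h | h
    · have hsplit : (∫ u in (0:ℝ)..x, 1 / m u ^ 2) + (∫ u in x..t₀, 1 / m u ^ 2) = C1 :=
        intervalIntegral.integral_add_adjacent_intervals (hm2int 0 x le_rfl hx)
          (hm2int x t₀ hx h)
      have := hintnn x t₀ hx h
      linarith
    · have hsplit : C1 + (∫ u in t₀..x, 1 / m u ^ 2) = ∫ u in (0:ℝ)..x, 1 / m u ^ 2 :=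
        intervalIntegral.integral_add_adjacent_intervals (hm2int 0 t₀ le_rfl (le_of_lt ht₀pos))
          (hm2int t₀ x (le_of_lt ht₀pos) h)
      have := hbound x h
      linarith
  -- now translate to the lintegral and contradict hint
  set g : ℝ → ENNReal := fun t => ENNReal.ofReal (1 / m t ^ 2) with hgdef
  have hgae : AEMeasurable g (volume.restrict (Ioi (0:ℝ))) := by
    have h1 : AEMeasurable (fun t => 1 / m t ^ 2) (volume.restrict (Ici (0:ℝ))) :=
      hm2c.aemeasurable measurableSet_Ici
    have h2 : AEMeasurable (fun t => 1 / m t ^ 2) (volume.restrict (Ioi (0:ℝ))) :=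
      h1.mono_measure (Measure.restrict_mono Ioi_subset_Ici_self le_rfl)
    exact ENNReal.measurable_ofReal.comp_aemeasurable h2
  have hIoceq : ∀ x ≥ (0:ℝ), (∫⁻ u in Ioc (0:ℝ) x, g u) =
      ENNReal.ofReal (∫ u in (0:ℝ)..x, 1 / m u ^ 2) := by
    intro x hx
    rw [intervalIntegral.integral_of_le hx]
    rw [MeasureTheory.ofReal_integral_eq_lintegral_ofReal]
    · have hic : IntegrableOn (fun u => 1 / m u ^ 2) (Icc 0 x) volume :=
        (hm2c.mono (fun y hy => hy.1)).integrableOn_compact isCompact_Icc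
      exact hic.mono_set Ioc_subset_Icc_self
    · filter_upwards with u
      positivity
  have hIocle : ∀ n : ℕ, (∫⁻ u in Ioc (0:ℝ) (t₀ + n), g u) ≤ ENNReal.ofReal (C1 + B) := by
    intro n
    have hx : (0:ℝ) ≤ t₀ + n := by positivity
    rw [hIoceq (t₀ + n) hx]
    exact ENNReal.ofReal_le_ofReal (hallbound (t₀ + n) hx)
  -- monotone convergence
  set fn : ℕ → ℝ → ENNReal := fun n => (Ioc (0:ℝ) (t₀ + n)).indicator g with hfndef
  have hfnae : ∀ n, AEMeasurable (fn n) (volume.restrict (Ioi (0:ℝ))) :=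
    fun n => hgae.indicator measurableSet_Ioc
  have hfnmono : ∀ x, Monotone fun n => fn n x := by
    intro x i j hij
    apply Set.indicator_le_indicator_of_subset
    · apply Ioc_subset_Ioc_right
      have : (i:ℝ) ≤ j := Nat.cast_le.mpr hij
      linarith
    · exact fun _ => zero_le
  have hsup : ∀ x ∈ Ioi (0:ℝ), (⨆ n, fn n x) = g x := by
    intro x hx
    obtain ⟨n, hn⟩ := exists_nat_ge (x - t₀)
    apply le_antisymm
    · apply iSup_le
      intro k
      exact (Set.indicator_le_self _ _ x)
    · have hmem : x ∈ Ioc (0:ℝ) (t₀ + n) := ⟨hx, by linarith⟩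
      have : fn n x = g x := Set.indicator_of_mem hmem g
      rw [← this]
      exact le_iSup (fun k => fn k x) n
  have hMCT := MeasureTheory.lintegral_iSup' hfnae
    (Filter.Eventually.of_forall hfnmono)
  have hlhs : (∫⁻ x in Ioi (0:ℝ), ⨆ n, fn n x) = ∫⁻ x in Ioi (0:ℝ), g x := by
    apply lintegral_congr_ae
    filter_upwards [ae_restrict_mem measurableSet_Ioi] with x hx
    exact hsup x hx
  have hrhs : ∀ n, (∫⁻ x in Ioi (0:ℝ), fn n x) = ∫⁻ u in Ioc (0:ℝ) (t₀ + n), g u := by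
    intro n
    rw [MeasureTheory.lintegral_indicator measurableSet_Ioc]
    rw [Measure.restrict_restrict measurableSet_Ioc]
    congr 1
    rw [inter_eq_self_of_subset_left Ioc_subset_Ioi_self]
  have hfinal : (∫⁻ x in Ioi (0:ℝ), g x) ≤ ENNReal.ofReal (C1 + B) := by
    rw [← hlhs, hMCT]
    apply iSup_le
    intro n
    rw [hrhs n]
    exact hIocle n
  rw [hint] at hfinal
  exact absurd (le_antisymm le_top hfinal) (by simp)
end

section
/- Let K, G : [0,∞) → ℝ be continuous functions with K(t) ≥ G(t) for all t ≥ 0, and let f, m : [0,∞) → ℝ be twice differentiable functions satisfying f''(t) + K(t)·f(t) = 0 with f(0) = 1 and f'(0) < 0, and m''(t) + G(t)·m(t) = 0 with m(0) = 1 and m'(0) = 0. If m(t) > 0 for all t ∈ (0,∞) and ∫₀^∞ 1/m(t)² dt = ∞, then there exists t₀ ∈ (0,∞) such that f(t) > 0 for all t ∈ [0,t₀) and f(t₀) = 0. -/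
open Set MeasureTheory

/-- Lemma 6.1 (L–2): ODE comparison forcing a zero of `f`. -/
theorem odeComparison_exists_zero_of_integral_div_sq_eq_top
    (K G f m : ℝ → ℝ)
    (hK : ContinuousOn K (Ici 0)) (hG : ContinuousOn G (Ici 0))
    (hKG : ∀ t ≥ (0:ℝ), G t ≤ K t)
    (hfd : ∀ t ≥ (0:ℝ), DifferentiableAt ℝ f t)
    (hfd' : ∀ t ≥ (0:ℝ), DifferentiableAt ℝ (deriv f) t)
    (hmd : ∀ t ≥ (0:ℝ), DifferentiableAt ℝ m t)
    (hmd' : ∀ t ≥ (0:ℝ), DifferentiableAt ℝ (deriv m) t)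
    (hfode : ∀ t ≥ (0:ℝ), deriv (deriv f) t + K t * f t = 0)
    (hf0 : f 0 = 1) (hf'0 : deriv f 0 < 0)
    (hmode : ∀ t ≥ (0:ℝ), deriv (deriv m) t + G t * m t = 0)
    (hm0 : m 0 = 1) (hm'0 : deriv m 0 = 0)
    (hmpos : ∀ t > (0:ℝ), 0 < m t)
    (hint : ∫⁻ t in Ioi (0:ℝ), ENNReal.ofReal (1 / (m t) ^ 2) = ⊤) :
    ∃ t₀ > (0:ℝ), (∀ t, 0 ≤ t → t < t₀ → 0 < f t) ∧ f t₀ = 0 := by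
  have hmpos' : ∀ t, 0 ≤ t → 0 < m t := by
    intro t ht
    rcases eq_or_lt_of_le ht with h | h
    · rw [← h, hm0]; norm_num
    · exact hmpos t h
  have hfc : ContinuousOn f (Ici 0) := fun t ht => ((hfd t ht).continuousAt).continuousWithinAt
  -- the auxiliary positive continuous extension of `1 / m ^ 2`
  set ψ : ℝ → ℝ := fun t => m (max t 0) with hψdef
  have hψc : Continuous ψ := by
    rw [continuous_iff_continuousAt]
    intro t
    have hmax : Continuous fun t : ℝ => max t 0 := continuous_id.max continuous_const
    show ContinuousAt (m ∘ fun s : ℝ => max s 0) t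
    exact ContinuousAt.comp (g := m) (f := fun s : ℝ => max s 0) (x := t)
      ((hmd _ (le_max_right t 0)).continuousAt) hmax.continuousAt
  have hψpos : ∀ t, 0 < ψ t := fun t => hmpos' _ (le_max_right t 0)
  set φ : ℝ → ℝ := fun t => 1 / (ψ t) ^ 2 with hφdef
  have hφc : Continuous φ := by
    apply continuous_const.div (hψc.pow 2)
    intro t
    have := hψpos t
    exact pow_ne_zero 2 (hψpos t).ne'
  have hφpos : ∀ t, 0 < φ t := fun t => by have := hψpos t; positivity
  have hφm : ∀ t, 0 < t → φ t = 1 / (m t) ^ 2 := by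
    intro t ht
    simp [hφdef, hψdef, max_eq_left ht.le]
  set I : ℝ → ℝ := fun t => ∫ s in (0:ℝ)..t, φ s with hIdef
  have hIder : ∀ t, HasDerivAt I (φ t) t := by
    intro t
    exact intervalIntegral.integral_hasDerivAt_right (hφc.intervalIntegrable 0 t)
      (hφc.stronglyMeasurable.stronglyMeasurableAtFilter) hφc.continuousAt
  have hIc : Continuous I := by
    rw [continuous_iff_continuousAt]
    exact fun t => (hIder t).differentiableAt.continuousAt
  -- Main claim : f becomes nonpositive somewhere
  have key : ∃ T > (0:ℝ), f T ≤ 0 := by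
    by_contra hcon
    push_neg at hcon
    have hfpos : ∀ t, 0 ≤ t → 0 < f t := by
      intro t ht
      rcases eq_or_lt_of_le ht with h | h
      · rw [← h, hf0]; norm_num
      · exact hcon t h
    set c := deriv f 0 with hcdef
    have hcneg : c < 0 := hf'0
    set W : ℝ → ℝ := fun t => deriv f t * m t - f t * deriv m t with hWdef
    have hWder : ∀ t, 0 ≤ t → HasDerivAt W ((G t - K t) * (f t * m t)) t := by
      intro t ht
      have h1 : HasDerivAt (fun s => deriv f s * m s)
          (deriv (deriv f) t * m t + deriv f t * deriv m t) t :=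
        ((hfd' t ht).hasDerivAt).mul ((hmd t ht).hasDerivAt)
      have h2 : HasDerivAt (fun s => f s * deriv m s)
          (deriv f t * deriv m t + f t * deriv (deriv m) t) t :=
        ((hfd t ht).hasDerivAt).mul ((hmd' t ht).hasDerivAt)
      have h3 := h1.sub h2
      refine h3.congr_deriv ?_
      have e1 := hfode t ht
      have e2 := hmode t ht
      linear_combination (m t) * e1 - (f t) * e2
    have hWanti : AntitoneOn W (Ici 0) := by
      apply antitoneOn_of_deriv_nonpos (convex_Ici 0)
      · intro t ht
        exact (hWder t ht).continuousAt.continuousWithinAt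
      · intro t ht
        rw [interior_Ici] at ht
        exact ((hWder t ht.le).differentiableAt).differentiableWithinAt
      · intro t ht
        rw [interior_Ici] at ht
        rw [(hWder t ht.le).deriv]
        have h4 := hKG t ht.le
        have h5 := mul_pos (hfpos t ht.le) (hmpos' t ht.le)
        nlinarith [mul_nonneg (sub_nonneg.mpr h4) h5.le]
    have hW0 : W 0 = c := by simp [hWdef, hm0, hm'0, hcdef]
    have hWle : ∀ t, 0 ≤ t → W t ≤ c := by
      intro t ht
      rw [← hW0]
      exact hWanti self_mem_Ici ht ht
    set g : ℝ → ℝ := fun t => f t / m t - c * I t with hgdef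
    have hgder : ∀ t, 0 < t → HasDerivAt g ((W t - c) / (m t) ^ 2) t := by
      intro t ht
      have hdiv : HasDerivAt (fun s => f s / m s)
          ((deriv f t * m t - f t * deriv m t) / (m t) ^ 2) t :=
        ((hfd t ht.le).hasDerivAt).div ((hmd t ht.le).hasDerivAt) (hmpos' t ht.le).ne'
      have h5 := hdiv.sub ((hIder t).const_mul c)
      refine h5.congr_deriv ?_
      rw [hφm t ht]
      have hmne : (m t) ^ 2 ≠ 0 := by have := hmpos' t ht.le; positivity
      field_simp
      rfl
    have hganti : AntitoneOn g (Ici 0) := by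
      apply antitoneOn_of_deriv_nonpos (convex_Ici 0)
      · apply ContinuousOn.sub
        · exact hfc.div (fun t ht => (hmd t ht).continuousAt.continuousWithinAt)
            (fun t ht => (hmpos' t ht).ne')
        · exact (continuous_const.mul hIc).continuousOn
      · intro t ht
        rw [interior_Ici] at ht
        exact ((hgder t ht).differentiableAt).differentiableWithinAt
      · intro t ht
        rw [interior_Ici] at ht
        rw [(hgder t ht).deriv]
        apply div_nonpos_of_nonpos_of_nonneg
        · linarith [hWle t ht.le]
        · positivity
    have hg0 : g 0 = 1 := by simp [hgdef, hIdef, hf0, hm0]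
    have hbound : ∀ t, 0 ≤ t → I t < 1 / (-c) := by
      intro t ht
      have h1 : g t ≤ 1 := by rw [← hg0]; exact hganti self_mem_Ici ht ht
      have h2 : 0 < f t / m t := div_pos (hfpos t ht) (hmpos' t ht)
      rw [lt_div_iff₀ (by linarith : (0:ℝ) < -c)]
      simp only [hgdef] at h1
      nlinarith
    -- the lintegral contradiction
    set gE : ℝ → ENNReal := fun t => ENNReal.ofReal (φ t) with hgE
    have hgEmeas : Measurable gE := ENNReal.measurable_ofReal.comp hφc.measurable
    have hIle : ∀ n : ℕ, ∫⁻ t in Ioc (0:ℝ) (n:ℝ), gE t ≤ ENNReal.ofReal (1 / (-c)) := by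
      intro n
      have hintg : IntegrableOn φ (Ioc (0:ℝ) (n:ℝ)) :=
        hφc.integrableOn_Ioc
      rw [hgE, ← ofReal_integral_eq_lintegral_ofReal hintg
        (Filter.Eventually.of_forall fun t => (hφpos t).le)]
      apply ENNReal.ofReal_le_ofReal
      have heq : ∫ t in Ioc (0:ℝ) (n:ℝ), φ t = I n :=
        (intervalIntegral.integral_of_le (by positivity : (0:ℝ) ≤ (n:ℝ))).symm
      rw [heq]
      exact (hbound n n.cast_nonneg).le
    have hmono : Monotone (fun n : ℕ => (Ioc (0:ℝ) (n:ℝ)).indicator gE) := by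
      intro a b hab
      apply Set.indicator_le_indicator_of_subset
      · exact Ioc_subset_Ioc le_rfl (by exact_mod_cast hab)
      · exact fun t => zero_le
    have hsup : ∀ t, (⨆ n : ℕ, (Ioc (0:ℝ) (n:ℝ)).indicator gE t)
        = (Ioi (0:ℝ)).indicator gE t := by
      intro t
      rcases le_or_gt t 0 with h | h
      · simp only [Set.indicator_of_notMem (fun ht : t ∈ Ioc (0:ℝ) _ => absurd ht.1 (not_lt.mpr h)),
          Set.indicator_of_notMem (fun ht : t ∈ Ioi (0:ℝ) => absurd ht (not_lt.mpr h))]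
        simp
      · obtain ⟨n, hn⟩ := exists_nat_ge t
        rw [Set.indicator_of_mem (mem_Ioi.mpr h)]
        apply le_antisymm
        · exact iSup_le fun k => Set.indicator_le_self _ _ t
        · exact le_iSup_of_le n (le_of_eq (Set.indicator_of_mem (mem_Ioc.mpr ⟨h, hn⟩) gE).symm)
    have htop : (∫⁻ t in Ioi (0:ℝ), gE t) = ⊤ := by
      rw [← hint]
      apply setLIntegral_congr_fun measurableSet_Ioi
      intro t ht
      show ENNReal.ofReal (φ t) = ENNReal.ofReal (1 / m t ^ 2)
      rw [hφm t ht]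
    have hfin : (∫⁻ t in Ioi (0:ℝ), gE t) ≤ ENNReal.ofReal (1 / (-c)) := by
      rw [← lintegral_indicator measurableSet_Ioi gE]
      calc ∫⁻ t, (Ioi (0:ℝ)).indicator gE t
          = ∫⁻ t, ⨆ n : ℕ, (Ioc (0:ℝ) (n:ℝ)).indicator gE t := by
            apply lintegral_congr
            intro t
            exact (hsup t).symm
        _ = ⨆ n : ℕ, ∫⁻ t, (Ioc (0:ℝ) (n:ℝ)).indicator gE t :=
            lintegral_iSup (fun n => hgEmeas.indicator measurableSet_Ioc) hmono
        _ ≤ ENNReal.ofReal (1 / (-c)) := by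
            apply iSup_le
            intro n
            rw [lintegral_indicator measurableSet_Ioc gE]
            exact hIle n
    rw [htop] at hfin
    exact absurd (lt_of_le_of_lt hfin ENNReal.ofReal_lt_top) (lt_irrefl _)
  -- extract the first zero
  obtain ⟨T, hTpos, hfT⟩ := key
  set S : Set ℝ := Ici (0:ℝ) ∩ f ⁻¹' Iic 0 with hSdef
  have hSclosed : IsClosed S :=
    hfc.preimage_isClosed_of_isClosed isClosed_Ici isClosed_Iic
  have hSne : S.Nonempty := ⟨T, hTpos.le, hfT⟩
  have hSbdd : BddBelow S := ⟨0, fun t ht => ht.1⟩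
  set t₀ := sInf S with ht₀def
  have ht₀mem : t₀ ∈ S := hSclosed.csInf_mem hSne hSbdd
  have ht₀nonneg : (0:ℝ) ≤ t₀ := ht₀mem.1
  have ht₀le : f t₀ ≤ 0 := ht₀mem.2
  have ht₀pos : 0 < t₀ := by
    rcases eq_or_lt_of_le ht₀nonneg with h | h
    · exfalso
      rw [← h, hf0] at ht₀le
      linarith
    · exact h
  have hfposlt : ∀ t, 0 ≤ t → t < t₀ → 0 < f t := by
    intro t ht htlt
    by_contra hle
    push_neg at hle
    exact absurd (csInf_le hSbdd ⟨ht, hle⟩) (not_le.mpr htlt)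
  refine ⟨t₀, ht₀pos, hfposlt, ?_⟩
  have hcont : ContinuousAt f t₀ := (hfd t₀ ht₀nonneg).continuousAt
  have htend : Filter.Tendsto f (nhdsWithin t₀ (Iio t₀)) (nhds (f t₀)) :=
    hcont.continuousWithinAt.tendsto
  have hge : 0 ≤ f t₀ := by
    apply ge_of_tendsto htend
    filter_upwards [Ioo_mem_nhdsLT_of_mem (⟨ht₀pos, le_refl t₀⟩ : t₀ ∈ Ioc 0 t₀)] with x hx
    exact (hfposlt x hx.1.le hx.2).le
  linarith
end
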